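/- Let X be a real vector space with seminorms ‖·‖ (the weak norm) and ‖·‖_s (the strong seminorm), let i : X → ℝ be a linear functional with |i(g)| ≤ ‖g‖ for all g ∈ X, and let 𝟙 ∈ X satisfy ‖𝟙‖ = 1 and i(𝟙) = 1. Let L : X → X be linear with i(L g) = i(g) for all g and ‖L g‖ ≤ N ‖g‖ for all g, where N ≥ 0. Let P : X → X be linear with ‖P g‖ ≤ ‖g‖ and ‖P g − g‖ ≤ K h ‖g‖_s for all g ∈ X, where K ≥ 0 and h > 0, and define Q g := P L P g + (i(g) − i(P L P g))·𝟙. Let u ∈ X satisfy L u = u and i(u) = 1. Let m ≥ 1 and let C_0, …, C_m be nonnegative reals with ‖Q^k v‖ ≤ C_k ‖v‖ for every v ∈ X with i(v) = 0 and 0 ≤ k ≤ m, and assume C_m < 1. Let ũ ∈ X satisfy ‖Q ũ − ũ‖ ≤ ε₁ and |i(ũ) − 1| ≤ ε₂ with 0 ≤ ε₂ < 1. Then ‖u − ũ‖ ≤ ((C_0 + C_1 + ⋯ + C_{m−1})/(1 − C_m)) · (2 K h (1 + N) ‖u‖_s + ε₁/(1 − ε₂)) + (ε₂/(1 − ε₂))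 ‖ũ‖. -/

import Mathlib

set_option maxHeartbeats 800000

lemma seminorm_apply_sum_le {X : Type*} [AddCommGroup X] [Module ℝ X]
    (p : Seminorm ℝ X) {ι : Type*} (s : Finset ι) (f : ι → X) :
    p (∑ j ∈ s, f j) ≤ ∑ j ∈ s, p (f j) := by
  classical
  induction s using Finset.induction_on with
  | empty => simp
  | insert _ _ hj ih =>
    rw [Finset.sum_insert hj, Finset.sum_insert hj]
    exact le_trans (map_add_le_add p _ _) (add_le_add_right ih _)

/-- Fixed point error estimate with approximately normalized numerical eigenvector:
`‖u - ũ‖ ≤ ((C_0+⋯+C_{m-1})/(1-C_m)) (2Kh(1+N)‖u‖_s + ε₁/(1-ε₂)) + (ε₂/(1-ε₂))‖ũ‖`. -/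
theorem fixed_point_error_estimate_approx_normalization
    {X : Type*} [AddCommGroup X] [Module ℝ X]
    (nw ns : Seminorm ℝ X) (i : X →ₗ[ℝ] ℝ) (one : X)
    (hone : nw one = 1) (hione : i one = 1)
    (hi : ∀ g : X, |i g| ≤ nw g)
    (L P : X →ₗ[ℝ] X) (N K h : ℝ) (hN : 0 ≤ N) (hK : 0 ≤ K) (hh : 0 < h)
    (hiL : ∀ g : X, i (L g) = i g)
    (hLbound : ∀ g : X, nw (L g) ≤ N * nw g)
    (hPw : ∀ g : X, nw (P g) ≤ nw g)
    (hPapprox : ∀ g : X, nw (P g - g) ≤ K * h * ns g)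
    (Q : X → X)
    (hQ : ∀ g : X, Q g = P (L (P g)) + (i g - i (P (L (P g)))) • one)
    (u : X) (hu : L u = u) (hiu : i u = 1)
    (m : ℕ) (hm : 1 ≤ m) (C : ℕ → ℝ)
    (hCpos : ∀ k ≤ m, 0 ≤ C k)
    (hC : ∀ v : X, i v = 0 → ∀ k ≤ m, nw (Q^[k] v) ≤ C k * nw v)
    (hCm : C m < 1)
    (ut : X) (ε₁ ε₂ : ℝ)
    (hres : nw (Q ut - ut) ≤ ε₁)
    (hnorm : |i ut - 1| ≤ ε₂) (hε₂0 : 0 ≤ ε₂) (hε₂1 : ε₂ < 1) :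
    nw (u - ut) ≤
      ((∑ k ∈ Finset.range m, C k) / (1 - C m)) *
        (2 * K * h * (1 + N) * ns u + ε₁ / (1 - ε₂)) +
      ε₂ / (1 - ε₂) * nw ut := by
  -- package Q as a linear map
  set Qlin : X →ₗ[ℝ] X :=
    { toFun := fun g => P (L (P g)) + (i g - i (P (L (P g)))) • one
      map_add' := by
        intro a b
        simp only [map_add, add_smul]
        module
      map_smul' := by
        intro c a
        simp only [map_smul, smul_eq_mul, RingHom.id_apply, smul_smul, smul_add]
        module } with hQlin
  have hQeq : Q = Qlin := funext fun g => hQ g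
  have hQlinapp : ∀ g : X, Qlin g = P (L (P g)) + (i g - i (P (L (P g)))) • one :=
    fun g => rfl
  -- Q preserves i
  have hiQ : ∀ g : X, i (Qlin g) = i g := by
    intro g
    simp [hQlinapp, map_add, map_smul, hione, smul_eq_mul]
  have hε₂1' : 0 < 1 - ε₂ := by linarith
  -- i ut is close to 1
  set α : ℝ := i ut with hα
  have hαge : 1 - ε₂ ≤ α := by
    have := abs_le.mp hnorm
    linarith [this.1]
  have hαpos : 0 < α := lt_of_lt_of_le hε₂1' hαge
  -- normalized approximate fixed point
  set v : X := α⁻¹ • ut with hv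
  have hiv : i v = 1 := by
    simp [hv, map_smul, smul_eq_mul, inv_mul_cancel₀ hαpos.ne']
    exact inv_mul_cancel₀ hαpos.ne'
  set e : X := u - v with he
  have hie : i e = 0 := by simp [he, map_sub, hiu, hiv]
  set d : X := Qlin e - e with hd
  have hid : i d = 0 := by simp [hd, map_sub, hiQ, hie]
  -- residual of v
  have hε₁0 : 0 ≤ ε₁ := le_trans (apply_nonneg nw _) hres
  have hresv : nw (Qlin v - v) ≤ ε₁ / (1 - ε₂) := by
    have : Qlin v - v = α⁻¹ • (Qlin ut - ut) := by
      simp [hv, map_smul, smul_sub]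
    rw [this, map_smul_eq_mul]
    have h1 : ‖α⁻¹‖ = α⁻¹ := by
      rw [Real.norm_eq_abs, abs_of_pos (inv_pos.mpr hαpos)]
    rw [h1]
    rw [← hQeq]
    calc α⁻¹ * nw (Q ut - ut) ≤ α⁻¹ * ε₁ := by
          exact mul_le_mul_of_nonneg_left hres (le_of_lt (inv_pos.mpr hαpos))
      _ ≤ (1 - ε₂)⁻¹ * ε₁ := by
          apply mul_le_mul_of_nonneg_right _ hε₁0
          exact inv_anti₀ hε₂1' hαge
      _ = ε₁ / (1 - ε₂) := by rw [inv_mul_eq_div]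
  -- residual of u
  have hnsu : 0 ≤ ns u := apply_nonneg ns u
  have hresu : nw (Qlin u - u) ≤ 2 * K * h * (1 + N) * ns u := by
    have hPu : nw (P u - u) ≤ K * h * ns u := hPapprox u
    have hdecomp : P (L (P u)) - u = P (L (P u - u)) + (P u - u) := by
      simp only [map_sub, hu]
      abel
    have h2 : nw (P (L (P u)) - u) ≤ (1 + N) * (K * h * ns u) := by
      rw [hdecomp]
      calc nw (P (L (P u - u)) + (P u - u))
          ≤ nw (P (L (P u - u))) + nw (P u - u) := map_add_le_add nw _ _
        _ ≤ N * nw (P u - u) + nw (P u - u) := by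
            have := le_trans (hPw (L (P u - u))) (hLbound (P u - u))
            linarith
        _ ≤ N * (K * h * ns u) + (K * h * ns u) := by
            have h3 := mul_le_mul_of_nonneg_left hPu hN
            linarith
        _ = (1 + N) * (K * h * ns u) := by ring
    have hform : Qlin u - u = (P (L (P u)) - u) + (i u - i (P (L (P u)))) • one := by
      rw [hQlinapp]; abel
    have hipart : |i u - i (P (L (P u)))| ≤ (1 + N) * (K * h * ns u) := by
      have : i u - i (P (L (P u))) = i (u - P (L (P u))) := by simp [map_sub]
      rw [this]
      refine le_trans (hi _) ?_
      have : nw (u - P (L (P u))) = nw (P (L (P u)) - u) := by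
        rw [← map_neg_eq_map nw]; congr 1; abel
      rw [this]; exact h2
    calc nw (Qlin u - u)
        ≤ nw (P (L (P u)) - u) + nw ((i u - i (P (L (P u)))) • one) := by
          rw [hform]; exact map_add_le_add nw _ _
      _ = nw (P (L (P u)) - u) + |i u - i (P (L (P u)))| * nw one := by
          rw [map_smul_eq_mul, Real.norm_eq_abs]
      _ ≤ (1 + N) * (K * h * ns u) + (1 + N) * (K * h * ns u) * 1 := by
          refine add_le_add h2 ?_
          rw [hone]
          exact mul_le_mul_of_nonneg_right hipart (by norm_num)
      _ = 2 * K * h * (1 + N) * ns u := by ring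
  -- bound on d
  have hdbound : nw d ≤ 2 * K * h * (1 + N) * ns u + ε₁ / (1 - ε₂) := by
    have : d = (Qlin u - u) - (Qlin v - v) := by
      simp only [hd, he, map_sub]; abel
    rw [this]
    refine le_trans (map_sub_le_add nw _ _) ?_
    exact add_le_add hresu hresv
  -- iteration formula
  have hiter : ∀ k : ℕ, Qlin^[k] e = e + ∑ j ∈ Finset.range k, Qlin^[j] d := by
    intro k
    induction k with
    | zero => simp
    | succ n ih =>
      rw [Function.iterate_succ_apply', ih, map_add, map_sum,
        Finset.sum_range_succ']
      simp only [← Function.iterate_succ_apply' Qlin]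
      rw [Function.iterate_zero_apply]
      rw [hd]
      abel
  -- key inequality on e
  have hnwd : 0 ≤ nw d := apply_nonneg nw d
  have hsum : nw e ≤ C m * nw e + (∑ k ∈ Finset.range m, C k) * nw d := by
    have h1 : e = Qlin^[m] e - ∑ j ∈ Finset.range m, Qlin^[j] d := by
      rw [hiter m]; abel
    have h2 : nw (∑ j ∈ Finset.range m, Qlin^[j] d)
        ≤ ∑ j ∈ Finset.range m, C j * nw d := by
      refine le_trans (seminorm_apply_sum_le nw _ _) ?_
      apply Finset.sum_le_sum
      intro j hj
      have hjm : j ≤ m := le_of_lt (Finset.mem_range.mp hj)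
      have := hC d hid j hjm
      rwa [hQeq] at this
    calc nw e ≤ nw (Qlin^[m] e) + nw (∑ j ∈ Finset.range m, Qlin^[j] d) := by
          nth_rewrite 1 [h1]; exact map_sub_le_add nw _ _
      _ ≤ C m * nw e + ∑ j ∈ Finset.range m, C j * nw d := by
          refine add_le_add ?_ h2
          have := hC e hie m le_rfl
          rwa [hQeq] at this
      _ = C m * nw e + (∑ k ∈ Finset.range m, C k) * nw d := by
          rw [← Finset.sum_mul]
  have hCm' : 0 < 1 - C m := by linarith
  have hS : 0 ≤ ∑ k ∈ Finset.range m, C k :=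
    Finset.sum_nonneg fun k hk => hCpos k (le_of_lt (Finset.mem_range.mp hk))
  have hebound : nw e ≤ ((∑ k ∈ Finset.range m, C k) / (1 - C m)) * nw d := by
    rw [div_mul_eq_mul_div, le_div_iff₀ hCm']
    nlinarith [apply_nonneg nw e]
  -- conclusion
  have hvut : nw (v - ut) ≤ ε₂ / (1 - ε₂) * nw ut := by
    have hform : v - ut = (α⁻¹ - 1) • ut := by
      rw [hv, sub_smul, one_smul]
    rw [hform, map_smul_eq_mul, Real.norm_eq_abs]
    apply mul_le_mul_of_nonneg_right _ (apply_nonneg nw ut)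
    have : α⁻¹ - 1 = (1 - α) / α := by field_simp
    rw [this, abs_div, abs_of_pos hαpos]
    rw [div_le_div_iff₀ hαpos hε₂1']
    have h1 : |1 - α| ≤ ε₂ := by rw [abs_sub_comm]; exact hnorm
    have h2 : |1 - α| * (1 - ε₂) ≤ ε₂ * (1 - ε₂) :=
      mul_le_mul_of_nonneg_right h1 (le_of_lt hε₂1')
    have h3 : ε₂ * (1 - ε₂) ≤ ε₂ * α := mul_le_mul_of_nonneg_left hαge hε₂0
    linarith
  have hfinal : u - ut = e + (v - ut) := by rw [he]; abel
  calc nw (u - ut) ≤ nw e + nw (v - ut) := by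
        rw [hfinal]; exact map_add_le_add nw _ _
    _ ≤ ((∑ k ∈ Finset.range m, C k) / (1 - C m)) * nw d
        + ε₂ / (1 - ε₂) * nw ut := add_le_add hebound hvut
    _ ≤ ((∑ k ∈ Finset.range m, C k) / (1 - C m)) *
          (2 * K * h * (1 + N) * ns u + ε₁ / (1 - ε₂))
        + ε₂ / (1 - ε₂) * nw ut := by
        refine add_le_add_left ?_ _
        exact mul_le_mul_of_nonneg_left hdbound (div_nonneg hS (le_of_lt hCm'))
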